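/- Visible excess is monotone: if P ⊆ Q are finite subsets of G, then the maximal cardinality of an excess set of P is at most the maximal cardinality of an excess set of Q. -/

import Mathlib

open scoped symmDiff

/-- The left translate `gS` of a finite shape `S` in a group `G`. -/
def gset {G : Type*} [Group G] (g : G) (S : Finset G) : Set G :=
  (fun s => g * s) '' (S : Set G)

/-- A `(C,S)`-filling move: `P ⊊ Q`, some translate `gS` meets `P` in exactly
`|S| - 1` elements, and `Q = P ∪ gC`. -/
def FillMove {G : Type*} [Group G] (C S : Finset G) (P Q : Set G) : Prop :=
  P ⊂ Q ∧ ∃ g : G, (P ∩ gset g S).ncard = S.card - 1 ∧ Q = P ∪ gset g C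

/-- The `(C,S)`-filling closure: the union of all sets reachable from `P` by
finitely many filling moves. -/
def fillClosure {G : Type*} [Group G] (C S : Finset G) (P : Set G) : Set G :=
  {x | ∃ Q : Set G, Relation.ReflTransGen (FillMove C S) P Q ∧ x ∈ Q}


section aux
variable {G : Type*} [Group G] (C S : Finset G)

lemma gset_finite (g : G) : (gset g S).Finite := S.finite_toSet.image _

lemma gset_ncard (g : G) : (gset g S).ncard = S.card := by
  rw [gset, Set.ncard_image_of_injective _ (mul_right_injective g), Set.ncard_coe_finset]

lemma gset_mono {g : G} (h : C ⊆ S) : gset g C ⊆ gset g S :=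
  Set.image_mono (by exact_mod_cast h)

lemma extend_move (hCS : C ⊆ S) {A W : Set G} {g : G}
    (hn : (A ∩ gset g S).ncard = S.card - 1) (hsub : A ∩ gset g S ⊆ W) :
    ∃ W', Relation.ReflTransGen (FillMove C S) W W' ∧ gset g C ⊆ W' ∧ W ⊆ W' := by
  by_cases hW : gset g C ⊆ W
  · exact ⟨W, Relation.ReflTransGen.refl, hW, subset_rfl⟩
  · obtain ⟨c, hcC, hcW⟩ := Set.not_subset.1 hW
    have hcS : c ∈ gset g S := gset_mono C S hCS hcC
    have h1 : W ∩ gset g S ⊆ gset g S \ {c} := by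
      rintro x ⟨hxW, hxS⟩
      exact ⟨hxS, fun hx => hcW (hx ▸ hxW)⟩
    have h2 : (W ∩ gset g S).ncard ≤ S.card - 1 := by
      calc (W ∩ gset g S).ncard ≤ (gset g S \ {c}).ncard :=
            Set.ncard_le_ncard h1 (gset_finite S g).diff
        _ = S.card - 1 := by
            rw [Set.ncard_diff_singleton_of_mem hcS, gset_ncard]
    have h3 : S.card - 1 ≤ (W ∩ gset g S).ncard := by
      rw [← hn]
      exact Set.ncard_le_ncard (fun x hx => ⟨hsub hx, hx.2⟩)
        ((gset_finite S g).inter_of_right _)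
    have hmove : FillMove C S W (W ∪ gset g C) := by
      refine ⟨⟨Set.subset_union_left, fun hcontra =>
        hcW (hcontra (Set.mem_union_right _ hcC))⟩, g, le_antisymm h2 h3, rfl⟩
    exact ⟨W ∪ gset g C, Relation.ReflTransGen.single hmove,
      Set.subset_union_right, Set.subset_union_left⟩

lemma replay (hCS : C ⊆ S) {A A' : Set G}
    (h : Relation.ReflTransGen (FillMove C S) A A') {W : Set G} (hAW : A ⊆ W) :
    ∃ W', Relation.ReflTransGen (FillMove C S) W W' ∧ A' ⊆ W' := by
  induction h with
  | refl => exact ⟨W, Relation.ReflTransGen.refl, hAW⟩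
  | tail hb hmv ih =>
    obtain ⟨W', hWW', hsub⟩ := ih
    obtain ⟨hlt, g, hn, rfl⟩ := hmv
    obtain ⟨W'', hW'W'', hC, hWsub⟩ := extend_move C S hCS hn
      (fun x hx => hsub hx.1)
    exact ⟨W'', hWW'.trans hW'W'', Set.union_subset (hsub.trans hWsub) hC⟩

lemma fillClosure_mono (hCS : C ⊆ S) {A B : Set G} (h : A ⊆ B) :
    fillClosure C S A ⊆ fillClosure C S B := by
  rintro x ⟨A', hA', hx⟩
  obtain ⟨W', hW', hsub⟩ := replay C S hCS hA' h
  exact ⟨W', hW', hsub hx⟩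

lemma rtg_subset {A A' : Set G} (h : Relation.ReflTransGen (FillMove C S) A A') :
    A ⊆ A' := by
  induction h with
  | refl => exact subset_rfl
  | tail _ hmv ih => exact ih.trans hmv.1.subset

lemma directed_reach (hCS : C ⊆ S) {B W₁ W₂ : Set G}
    (h1 : Relation.ReflTransGen (FillMove C S) B W₁)
    (h2 : Relation.ReflTransGen (FillMove C S) B W₂) :
    ∃ W₃, Relation.ReflTransGen (FillMove C S) B W₃ ∧ W₁ ⊆ W₃ ∧ W₂ ⊆ W₃ := by
  obtain ⟨W₃, hW₃, hsub⟩ := replay C S hCS h2 (rtg_subset C S h1)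
  exact ⟨W₃, h1.trans hW₃, rtg_subset C S hW₃, hsub⟩

lemma finset_in_closure (hCS : C ⊆ S) {B : Set G} (T : Finset G) :
    (T : Set G) ⊆ fillClosure C S B →
    ∃ W, Relation.ReflTransGen (FillMove C S) B W ∧ (T : Set G) ⊆ W := by
  classical
  induction T using Finset.induction_on with
  | empty => exact fun _ => ⟨B, Relation.ReflTransGen.refl, by simp⟩
  | @insert a T haT ih =>
    intro h
    rw [Finset.coe_insert] at h
    obtain ⟨W₁, hW₁, hsub₁⟩ := ih (fun x hx => h (Set.mem_insert_of_mem _ hx))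
    obtain ⟨W₂, hW₂, hx₂⟩ := h (Set.mem_insert a _)
    obtain ⟨W₃, hW₃, hs₁, hs₂⟩ := directed_reach C S hCS hW₁ hW₂
    rw [Finset.coe_insert]
    exact ⟨W₃, hW₃, Set.insert_subset (hs₂ hx₂) (hsub₁.trans hs₁)⟩

lemma finite_in_closure (hCS : C ⊆ S) {B : Set G} {T : Set G} (hT : T.Finite)
    (h : T ⊆ fillClosure C S B) :
    ∃ W, Relation.ReflTransGen (FillMove C S) B W ∧ T ⊆ W := by
  obtain ⟨W, hW, hsub⟩ := finset_in_closure C S hCS hT.toFinset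
    (by rw [Set.Finite.coe_toFinset]; exact h)
  rw [Set.Finite.coe_toFinset] at hsub
  exact ⟨W, hW, hsub⟩

lemma closure_closed (hCS : C ⊆ S) {B A A' : Set G}
    (hA : A ⊆ fillClosure C S B) (hmv : FillMove C S A A') :
    A' ⊆ fillClosure C S B := by
  obtain ⟨hlt, g, hn, rfl⟩ := hmv
  obtain ⟨W, hW, hTW⟩ := finite_in_closure C S hCS
    ((gset_finite S g).inter_of_right A) (fun x hx => hA hx.1)
  obtain ⟨W', hWW', hC, _⟩ := extend_move C S hCS hn hTW
  exact Set.union_subset hA (fun x hx => ⟨W', hW.trans hWW', hC hx⟩)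

lemma closure_subset (hCS : C ⊆ S) {B B' : Set G} (h : B' ⊆ fillClosure C S B) :
    fillClosure C S B' ⊆ fillClosure C S B := by
  have key : ∀ X, Relation.ReflTransGen (FillMove C S) B' X → X ⊆ fillClosure C S B := by
    intro X hX
    induction hX with
    | refl => exact h
    | tail _ hmv ih => exact closure_closed C S hCS ih hmv
  rintro x ⟨X, hX, hx⟩
  exact key X hX hx

lemma self_subset_closure (B : Set G) : B ⊆ fillClosure C S B :=
  fun x hx => ⟨B, Relation.ReflTransGen.refl, hx⟩

end aux

/-- `Q` is an excess set of the finite pattern `P` if removing it does not change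
the filling closure. -/
def ExcessSet {G : Type*} [Group G] (C S : Finset G) (P Q : Finset G) : Prop :=
  Q ⊆ P ∧ fillClosure C S ((P : Set G) \ (Q : Set G)) = fillClosure C S (P : Set G)

/-- The visible excess of a pattern: the maximal cardinality of an excess set. -/
noncomputable def visibleExcess {G : Type*} [Group G] (C S : Finset G) (P : Finset G) : ℕ :=
  sSup {n : ℕ | ∃ Q : Finset G, ExcessSet C S P Q ∧ Q.card = n}

/-- Visible excess is monotone: if `P ⊆ Q` then `Ê(P) ≤ Ê(Q)`. -/
theorem visibleExcess_monotone {G : Type*} [Group G] (C S : Finset G) (hCS : C ⊆ S)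
    (P Q : Finset G) (hPQ : P ⊆ Q) :
    visibleExcess C S P ≤ visibleExcess C S Q := by
  have hsubset : {n : ℕ | ∃ R : Finset G, ExcessSet C S P R ∧ R.card = n} ⊆
      {n : ℕ | ∃ R : Finset G, ExcessSet C S Q R ∧ R.card = n} := by
    rintro n ⟨R, ⟨hRP, hfill⟩, rfl⟩
    refine ⟨R, ⟨hRP.trans hPQ, ?_⟩, rfl⟩
    apply le_antisymm
    · exact fillClosure_mono C S hCS Set.diff_subset
    · apply closure_subset C S hCS
      intro q hq
      by_cases hqR : q ∈ (R : Set G)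
      · have h1 : (q : G) ∈ fillClosure C S ((P : Set G) \ (R : Set G)) := by
          rw [hfill]; exact self_subset_closure C S _ (by exact_mod_cast hRP hqR)
        exact fillClosure_mono C S hCS
          (Set.diff_subset_diff_left (by exact_mod_cast hPQ)) h1
      · exact self_subset_closure C S _ ⟨hq, hqR⟩
  apply csSup_le_csSup
  · refine ⟨Q.card, ?_⟩
    rintro n ⟨R, ⟨hRQ, _⟩, rfl⟩
    exact Finset.card_le_card hRQ
  · exact ⟨0, ∅, ⟨Finset.empty_subset _, by simp⟩, rfl⟩
  · exact hsubset
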